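/- arXiv:2007.11732 — 6 statements merged into one kernel-verified Lean document; each statement's English description precedes it below -/
import Mathlib

section
/- Define the following polynomials in k[x₁,x₂,x₃]: A₁₁ := −3φι(1−ρ)⁻¹·x₁, A₂₂ := −3φι(1−ρ)⁻¹·x₂, A₃₃ := −3φι(1−ρ)⁻¹·x₃, A₃₂ := ψι·x₁, B₁₂ := −ρψι(1−ρ)⁻¹·x₃, B₁₃ := −ρ²ψι(1−ρ)⁻¹·x₂, C₁₂ := −ψι(1−ρ²)⁻¹·x₃, C₁₃ := −ρ²ψι(1−ρ²)⁻¹·x₂ (note 1−ρ and 1−ρ² are nonzero in k). Then A₁₁A₂₂A₃₃ − A₂₂B₁₃C₁₃ − A₃₃B₁₂C₁₂ + A₃₂B₁₂C₁₃ is congruent, modulo the Jacobian ideal J, to (27φ³ − ψ³)·ι·((1−ρ)⁻¹)³·x₁x₂x₃. (This is the computation of the structure constant σ_{χ,χ²} of the orbifold Jacobian algebra Jac(W, ℤ/3), giving ξ_χ • ξ_{χ²} = ((27φ³ − ψ³)ι/(1−ρ)³)·x₁x₂x₃.) -/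
open MvPolynomial

/-- Computation of the structure constant `σ_{χ,χ²}` of the orbifold Jacobian algebra
`Jac(W, ℤ/3)` for `W = −φι(x₁³+x₂³+x₃³) + ψι·x₁x₂x₃`:
`A₁₁A₂₂A₃₃ − A₂₂B₁₃C₁₃ − A₃₃B₁₂C₁₂ + A₃₂B₁₂C₁₃` is congruent modulo the Jacobian ideal `J`
to `(27φ³ − ψ³)·ι·((1−ρ)⁻¹)³·x₁x₂x₃`. -/
theorem stmt1 (k : Type*) [Field k] [CharZero k] (ι ρ φ ψ : k)
    (hι : ι ^ 2 = -1) (hρ : ρ ^ 2 + ρ + 1 = 0)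
    (W : MvPolynomial (Fin 3) k)
    (hW : W = -(C φ * C ι) * (X 0 ^ 3 + X 1 ^ 3 + X 2 ^ 3)
        + C ψ * C ι * (X 0 * X 1 * X 2))
    (J : Ideal (MvPolynomial (Fin 3) k))
    (hJ : J = Ideal.span {pderiv 0 W, pderiv 1 W, pderiv 2 W})
    (A11 A22 A33 A32 B12 B13 C12 C13 : MvPolynomial (Fin 3) k)
    (hA11 : A11 = C (-(3 * φ * ι) * (1 - ρ)⁻¹) * X 0)
    (hA22 : A22 = C (-(3 * φ * ι) * (1 - ρ)⁻¹) * X 1)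
    (hA33 : A33 = C (-(3 * φ * ι) * (1 - ρ)⁻¹) * X 2)
    (hA32 : A32 = C (ψ * ι) * X 0)
    (hB12 : B12 = C (-(ρ * ψ * ι) * (1 - ρ)⁻¹) * X 2)
    (hB13 : B13 = C (-(ρ ^ 2 * ψ * ι) * (1 - ρ)⁻¹) * X 1)
    (hC12 : C12 = C (-(ψ * ι) * (1 - ρ ^ 2)⁻¹) * X 2)
    (hC13 : C13 = C (-(ρ ^ 2 * ψ * ι) * (1 - ρ ^ 2)⁻¹) * X 1) :
    A11 * A22 * A33 - A22 * B13 * C13 - A33 * B12 * C12 + A32 * B12 * C13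
      - C ((27 * φ ^ 3 - ψ ^ 3) * ι * ((1 - ρ)⁻¹) ^ 3) * (X 0 * X 1 * X 2) ∈ J := by
  have h3 : (1 - ρ) * (1 - ρ ^ 2) = 3 := by linear_combination (ρ - 2) * hρ
  have hne : (1 - ρ) ≠ 0 := by
    intro h; rw [h, zero_mul] at h3; norm_num at h3
  have hne2 : (1 - ρ ^ 2) ≠ 0 := by
    intro h; rw [h, mul_zero] at h3; norm_num at h3
  set c : k := ρ * ψ ^ 2 * (1 - ρ)⁻¹ / 3 with hc
  -- the three scalar identities
  have e1 : -(3 * φ * ι) * (1 - ρ)⁻¹ * (-(ρ ^ 2 * ψ * ι) * (1 - ρ)⁻¹)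
      * (-(ρ ^ 2 * ψ * ι) * (1 - ρ ^ 2)⁻¹) = c * φ * ι * 3 := by
    rw [hc]; field_simp
    linear_combination (-3*ι*ρ^4*φ*ψ^2) * hι
      + (-ι*ρ*φ*ψ^2 + 2*ι*ρ^2*φ*ψ^2) * hρ
  have e2 : -(3 * φ * ι) * (1 - ρ)⁻¹ * (-(ρ * ψ * ι) * (1 - ρ)⁻¹)
      * (-(ψ * ι) * (1 - ρ ^ 2)⁻¹) = c * φ * ι * 3 := by
    rw [hc]; field_simp
    linear_combination (-3*ι*ρ*φ*ψ^2) * hι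
      + (2*ι*ρ*φ*ψ^2 - ι*ρ^2*φ*ψ^2) * hρ
  have e3 : -(3 * φ * ι) * (1 - ρ)⁻¹ * (-(3 * φ * ι) * (1 - ρ)⁻¹)
        * (-(3 * φ * ι) * (1 - ρ)⁻¹)
      + ψ * ι * (-(ρ * ψ * ι) * (1 - ρ)⁻¹) * (-(ρ ^ 2 * ψ * ι) * (1 - ρ ^ 2)⁻¹)
      - (27 * φ ^ 3 - ψ ^ 3) * ι * ((1 - ρ)⁻¹) ^ 3 = c * ψ * ι * 2 := by
    rw [hc]; field_simp
    linear_combination (-81*ι*φ^3 + 81*ι*ρ^2*φ^3 + 3*ι*ρ^3*ψ^3 - 6*ι*ρ^4*ψ^3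
        + 3*ι*ρ^5*ψ^3) * hι
      + (3*ι*ψ^3 - 5*ι*ρ*ψ^3 + 3*ι*ρ^2*ψ^3 - ι*ρ^3*ψ^3) * hρ
  -- lift the scalar identities to polynomial identities
  have H1 : (C (-(3 * φ * ι) * (1 - ρ)⁻¹) * C (-(ρ ^ 2 * ψ * ι) * (1 - ρ)⁻¹)
      * C (-(ρ ^ 2 * ψ * ι) * (1 - ρ ^ 2)⁻¹) : MvPolynomial (Fin 3) k)
      = -(C c * C (-(3 * φ * ι))) := by
    simp only [← map_mul, ← map_neg]
    exact congrArg C (by linear_combination e1)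
  have H2 : (C (-(3 * φ * ι) * (1 - ρ)⁻¹) * C (-(ρ * ψ * ι) * (1 - ρ)⁻¹)
      * C (-(ψ * ι) * (1 - ρ ^ 2)⁻¹) : MvPolynomial (Fin 3) k)
      = -(C c * C (-(3 * φ * ι))) := by
    simp only [← map_mul, ← map_neg]
    exact congrArg C (by linear_combination e2)
  have H3 : (C (-(3 * φ * ι) * (1 - ρ)⁻¹) * C (-(3 * φ * ι) * (1 - ρ)⁻¹)
        * C (-(3 * φ * ι) * (1 - ρ)⁻¹)
      + C (ψ * ι) * C (-(ρ * ψ * ι) * (1 - ρ)⁻¹) * C (-(ρ ^ 2 * ψ * ι) * (1 - ρ ^ 2)⁻¹)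
      - C ((27 * φ ^ 3 - ψ ^ 3) * ι * ((1 - ρ)⁻¹) ^ 3) : MvPolynomial (Fin 3) k)
      = C 2 * (C c * C (ψ * ι)) := by
    simp only [← map_mul, ← map_neg, ← map_add, ← map_sub]
    exact congrArg C (by linear_combination e3)
  -- compute the partial derivatives
  have hp1 : pderiv 1 W = C (-(3 * φ * ι)) * X 1 ^ 2 + C (ψ * ι) * (X 0 * X 2) := by
    subst hW
    simp [pderiv_X, Pi.single_apply, map_ofNat]
    ring
  have hp2 : pderiv 2 W = C (-(3 * φ * ι)) * X 2 ^ 2 + C (ψ * ι) * (X 0 * X 1) := by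
    subst hW
    simp [pderiv_X, Pi.single_apply, map_ofNat]
    ring
  -- the key polynomial identity
  have key : A11 * A22 * A33 - A22 * B13 * C13 - A33 * B12 * C12 + A32 * B12 * C13
      - C ((27 * φ ^ 3 - ψ ^ 3) * ι * ((1 - ρ)⁻¹) ^ 3) * (X 0 * X 1 * X 2)
      = C c * X 1 * pderiv 1 W + C c * X 2 * pderiv 2 W := by
    rw [hA11, hA22, hA33, hA32, hB12, hB13, hC12, hC13, hp1, hp2]
    linear_combination (norm := (simp only [map_ofNat]; ring1)) (-(X 1 : MvPolynomial (Fin 3) k) ^ 3) * H1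
      + (-(X 2 : MvPolynomial (Fin 3) k) ^ 3) * H2
      + ((X 0 : MvPolynomial (Fin 3) k) * X 1 * X 2) * H3
  rw [hJ, key]
  exact Ideal.add_mem _
    (Ideal.mul_mem_left _ _ (Ideal.subset_span (by simp)))
    (Ideal.mul_mem_left _ _ (Ideal.subset_span (by simp)))
end

section
/- Assume φ ≠ 0. Then for all a, b ∈ k, the polynomial −aι(x₁³ + x₂³ + x₃³) + bι·x₁x₂x₃ is congruent, modulo the Jacobian ideal J, to ι·(b − a·ψ·φ⁻¹)·x₁x₂x₃. (Applied with a = q·∂φ/∂q and b = q·∂ψ/∂q, this gives the identity q·∂W/∂q = ιq(−(ψ/φ)·∂φ/∂q + ∂ψ/∂q)·x₁x₂x₃ in Jac(W) used to compute the Kodaira–Spencer image of the point class of T².) -/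
open MvPolynomial

/-- For `W = −φι(x₁³+x₂³+x₃³) + ψι·x₁x₂x₃` with `φ ≠ 0`, for all `a b ∈ k` the
polynomial `−aι(x₁³+x₂³+x₃³) + bι·x₁x₂x₃` is congruent modulo the Jacobian ideal `J`
to `ι·(b − a·ψ·φ⁻¹)·x₁x₂x₃`. -/
theorem stmt2 (k : Type*) [Field k] [CharZero k] (ι φ ψ : k) (hι : ι ^ 2 = -1)
    (hφ : φ ≠ 0)
    (W : MvPolynomial (Fin 3) k)
    (hW : W = -(C φ * C ι) * (X 0 ^ 3 + X 1 ^ 3 + X 2 ^ 3)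
        + C ψ * C ι * (X 0 * X 1 * X 2))
    (J : Ideal (MvPolynomial (Fin 3) k))
    (hJ : J = Ideal.span {pderiv 0 W, pderiv 1 W, pderiv 2 W}) :
    ∀ a b : k,
      (-(C a * C ι) * (X 0 ^ 3 + X 1 ^ 3 + X 2 ^ 3) + C b * C ι * (X 0 * X 1 * X 2))
        - C (ι * (b - a * ψ * φ⁻¹)) * (X 0 * X 1 * X 2) ∈ J := by
  intro a b
  have h1 : (C φ : MvPolynomial (Fin 3) k) * C φ⁻¹ = 1 := by
    rw [← C_mul, mul_inv_cancel₀ hφ, C_1]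
  have h3 : (C (3⁻¹ : k) : MvPolynomial (Fin 3) k) * 3 = 1 := by
    rw [← map_ofNat C 3, ← C_mul]; norm_num
  have hd0 : pderiv 0 W = -(C φ * C ι) * (3 * X 0 ^ 2) + C ψ * C ι * (X 1 * X 2) := by
    rw [hW]
    simp [pderiv_X_self, pderiv_X_of_ne, mul_comm]
  have hd1 : pderiv 1 W = -(C φ * C ι) * (3 * X 1 ^ 2) + C ψ * C ι * (X 0 * X 2) := by
    rw [hW]
    simp [pderiv_X_self, pderiv_X_of_ne, mul_comm]
  have hd2 : pderiv 2 W = -(C φ * C ι) * (3 * X 2 ^ 2) + C ψ * C ι * (X 0 * X 1) := by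
    rw [hW]
    simp [pderiv_X_self, pderiv_X_of_ne, mul_comm]
  have key : (-(C a * C ι) * (X 0 ^ 3 + X 1 ^ 3 + X 2 ^ 3) + C b * C ι * (X 0 * X 1 * X 2))
        - C (ι * (b - a * ψ * φ⁻¹)) * (X 0 * X 1 * X 2)
      = C (a * φ⁻¹ * 3⁻¹) * X 0 * pderiv 0 W
        + C (a * φ⁻¹ * 3⁻¹) * X 1 * pderiv 1 W
        + C (a * φ⁻¹ * 3⁻¹) * X 2 * pderiv 2 W := by
    rw [hd0, hd1, hd2]
    simp only [map_mul, map_sub]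
    linear_combination (C a * C ι * (X 0^3+X 1^3+X 2^3) * (C (3⁻¹:k) * 3)) * h1
      + (C a * C ι * (X 0^3+X 1^3+X 2^3) - C a * C ψ * C ι * C φ⁻¹ * (X 0 * X 1 * X 2)) * h3
  rw [key, hJ]
  refine add_mem (add_mem ?_ ?_) ?_ <;>
    exact Ideal.mul_mem_left _ _ (Ideal.subset_span (by simp))
end

section
/- Let γ, q, a, b ∈ k with φ ≠ 0 and q ≠ 0, and assume the relation γ²·q·(−ψa + φb) = −8φ(27φ³ − ψ³). Then, modulo the Jacobian ideal J, the polynomial −γ²·(1+ρ)·(1−ρ)⁻¹·(q/24)·(−aι(x₁³ + x₂³ + x₃³) + bι·x₁x₂x₃) is congruent to ι·(27φ³ − ψ³)·((1−ρ)⁻¹)³·x₁x₂x₃. (This is the algebraic content of the verification ks(l_χ ∪ l_{χ²}) = ks(l_χ) • ks(l_{χ²}) in the proof that the Kodaira–Spencer map QH*(T²) → Jac(W, ℤ/3) is a ring homomorphism.) -/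
open MvPolynomial

set_option maxHeartbeats 1000000 in
/-- Algebraic content of the verification `ks(l_χ ∪ l_{χ²}) = ks(l_χ) • ks(l_{χ²})` for
`T²`: if `γ²·q·(−ψa + φb) = −8φ(27φ³ − ψ³)` with `φ ≠ 0`, `q ≠ 0`, then modulo the
Jacobian ideal `J` of `W = −φι(x₁³+x₂³+x₃³) + ψι·x₁x₂x₃` the polynomial
`−γ²·(1+ρ)·(1−ρ)⁻¹·(q/24)·(−aι(x₁³+x₂³+x₃³) + bι·x₁x₂x₃)` is congruent to
`ι·(27φ³ − ψ³)·((1−ρ)⁻¹)³·x₁x₂x₃`. -/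
theorem stmt4 (k : Type*) [Field k] [CharZero k] (ι ρ φ ψ : k)
    (hι : ι ^ 2 = -1) (hρ : ρ ^ 2 + ρ + 1 = 0)
    (W : MvPolynomial (Fin 3) k)
    (hW : W = -(C φ * C ι) * (X 0 ^ 3 + X 1 ^ 3 + X 2 ^ 3)
        + C ψ * C ι * (X 0 * X 1 * X 2))
    (J : Ideal (MvPolynomial (Fin 3) k))
    (hJ : J = Ideal.span {pderiv 0 W, pderiv 1 W, pderiv 2 W})
    (γ q a b : k) (hφ : φ ≠ 0) (hq : q ≠ 0)
    (hrel : γ ^ 2 * q * (-(ψ * a) + φ * b) = -(8 * φ * (27 * φ ^ 3 - ψ ^ 3))) :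
    C (-(γ ^ 2) * (1 + ρ) * (1 - ρ)⁻¹ * (q / 24)) *
        (-(C a * C ι) * (X 0 ^ 3 + X 1 ^ 3 + X 2 ^ 3) + C b * C ι * (X 0 * X 1 * X 2))
      - C (ι * (27 * φ ^ 3 - ψ ^ 3) * ((1 - ρ)⁻¹) ^ 3) * (X 0 * X 1 * X 2) ∈ J := by
  have hρ1 : (1 : k) - ρ ≠ 0 := by
    intro h
    have h1 : ρ = 1 := (sub_eq_zero.mp h).symm
    rw [h1] at hρ; norm_num at hρ
  set c : k := -(γ ^ 2) * (1 + ρ) * (1 - ρ)⁻¹ * (q / 24) with hc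
  set d : k := ι * (27 * φ ^ 3 - ψ ^ 3) * ((1 - ρ)⁻¹) ^ 3 with hd
  set e : k := c * a / (3 * φ) with he
  have hA : -(c * a * ι) = e * (-(3 * φ * ι)) := by
    rw [he]; field_simp
  have h3 : (1 + ρ) * (1 - ρ) ^ 2 = 3 := by linear_combination (ρ - 2) * hρ
  have hB : c * b * ι - d = e * (3 * ψ * ι) := by
    rw [he, hc, hd]
    field_simp
    linear_combination (-ι*(1+ρ)*(1-ρ)^2) * hrel
      + (8*ι*φ*(27*φ^3-ψ^3)) * h3
  have hA' := congrArg (C : k → MvPolynomial (Fin 3) k) hA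
  have hB' := congrArg (C : k → MvPolynomial (Fin 3) k) hB
  simp only [map_mul, map_neg, map_sub, map_add, map_ofNat] at hA' hB'
  have key : C c *
        (-(C a * C ι) * (X 0 ^ 3 + X 1 ^ 3 + X 2 ^ 3) + C b * C ι * (X 0 * X 1 * X 2))
      - C d * (X 0 * X 1 * X 2)
      = C e * (X 0 * pderiv 0 W + X 1 * pderiv 1 W + X 2 * pderiv 2 W) := by
    subst hW
    simp [pderiv_X, pderiv_mul]
    linear_combination (X 0 ^ 3 + X 1 ^ 3 + X 2 ^ 3 : MvPolynomial (Fin 3) k) * hA'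
      + (X 0 * X 1 * X 2 : MvPolynomial (Fin 3) k) * hB'
  rw [key, hJ]
  refine Ideal.mul_mem_left _ _ (Ideal.add_mem _ (Ideal.add_mem _ ?_ ?_) ?_)
  · exact Ideal.mul_mem_left _ _ (Ideal.subset_span (Set.mem_insert _ _))
  · exact Ideal.mul_mem_left _ _
      (Ideal.subset_span (Set.mem_insert_of_mem _ (Set.mem_insert _ _)))
  · exact Ideal.mul_mem_left _ _
      (Ideal.subset_span (Set.mem_insert_of_mem _ (Set.mem_insert_of_mem _ rfl)))
end

section
/- Assume φ ≠ 0, ψ ≠ 0 and ψ³ ≠ 27φ³. Then the quotient ring Jac(W) = k[x₁,x₂,x₃]/J is spanned as a k-vector space by the classes of the eight monomials 1, x₁, x₂, x₃, x₁², x₂², x₃², x₁x₂x₃. -/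
open MvPolynomial
set_option maxHeartbeats 8000000 in
set_option synthInstance.maxHeartbeats 200000 in

/-- For `W = −φι(x₁³+x₂³+x₃³) + ψι·x₁x₂x₃` with `φ ≠ 0`, `ψ ≠ 0`, `ψ³ ≠ 27φ³`,
the quotient `Jac(W) = k[x₁,x₂,x₃]/J` is spanned as a `k`-vector space by the classes
of `1, x₁, x₂, x₃, x₁², x₂², x₃², x₁x₂x₃`. -/
theorem stmt7 (k : Type*) [Field k] [CharZero k] (ι φ ψ : k) (hι : ι ^ 2 = -1)
    (hφ : φ ≠ 0) (hψ : ψ ≠ 0) (hψφ : ψ ^ 3 ≠ 27 * φ ^ 3)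
    (W : MvPolynomial (Fin 3) k)
    (hW : W = -(C φ * C ι) * (X 0 ^ 3 + X 1 ^ 3 + X 2 ^ 3)
        + C ψ * C ι * (X 0 * X 1 * X 2))
    (J : Ideal (MvPolynomial (Fin 3) k))
    (hJ : J = Ideal.span {pderiv 0 W, pderiv 1 W, pderiv 2 W}) :
    Submodule.span k
      ({Ideal.Quotient.mk J 1, Ideal.Quotient.mk J (X 0), Ideal.Quotient.mk J (X 1),
        Ideal.Quotient.mk J (X 2), Ideal.Quotient.mk J (X 0 ^ 2),
        Ideal.Quotient.mk J (X 1 ^ 2), Ideal.Quotient.mk J (X 2 ^ 2),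
        Ideal.Quotient.mk J (X 0 * X 1 * X 2)} :
          Set (MvPolynomial (Fin 3) k ⧸ J)) = ⊤ := by

  have hι2 : (C ι : MvPolynomial (Fin 3) k) * C ι = -1 := by
    rw [← map_mul, show ι * ι = -1 from by rw [← sq, hι], map_neg, map_one]
  -- explicit partial derivatives
  have hd0 : pderiv 0 W = C ψ * C ι * (X 1 * X 2) - 3 * C φ * C ι * X 0 ^ 2 := by
    subst hW; simp [pderiv_X, Pi.single_apply, map_ofNat]; ring
  have hd1 : pderiv 1 W = C ψ * C ι * (X 0 * X 2) - 3 * C φ * C ι * X 1 ^ 2 := by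
    subst hW; simp [pderiv_X, Pi.single_apply, map_ofNat]; ring
  have hd2 : pderiv 2 W = C ψ * C ι * (X 0 * X 1) - 3 * C φ * C ι * X 2 ^ 2 := by
    subst hW; simp [pderiv_X, Pi.single_apply, map_ofNat]; ring
  have hJ0 : pderiv 0 W ∈ J := hJ ▸ Ideal.subset_span (by simp)
  have hJ1 : pderiv 1 W ∈ J := hJ ▸ Ideal.subset_span (by simp)
  have hJ2 : pderiv 2 W ∈ J := hJ ▸ Ideal.subset_span (by simp)
  -- the rescaled generators
  have hG0 : (3 * C φ * X 0 ^ 2 - C ψ * (X 1 * X 2) : MvPolynomial (Fin 3) k) ∈ J := by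
    have h : (3 * C φ * X 0 ^ 2 - C ψ * (X 1 * X 2) : MvPolynomial (Fin 3) k) = C ι * pderiv 0 W := by
      rw [hd0]; linear_combination (3 * C φ * X 0 ^ 2 - C ψ * (X 1 * X 2) : MvPolynomial (Fin 3) k) * hι2
    exact h ▸ J.mul_mem_left _ hJ0
  have hG1 : (3 * C φ * X 1 ^ 2 - C ψ * (X 0 * X 2) : MvPolynomial (Fin 3) k) ∈ J := by
    have h : (3 * C φ * X 1 ^ 2 - C ψ * (X 0 * X 2) : MvPolynomial (Fin 3) k) = C ι * pderiv 1 W := by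
      rw [hd1]; linear_combination (3 * C φ * X 1 ^ 2 - C ψ * (X 0 * X 2) : MvPolynomial (Fin 3) k) * hι2
    exact h ▸ J.mul_mem_left _ hJ1
  have hG2 : (3 * C φ * X 2 ^ 2 - C ψ * (X 0 * X 1) : MvPolynomial (Fin 3) k) ∈ J := by
    have h : (3 * C φ * X 2 ^ 2 - C ψ * (X 0 * X 1) : MvPolynomial (Fin 3) k) = C ι * pderiv 2 W := by
      rw [hd2]; linear_combination (3 * C φ * X 2 ^ 2 - C ψ * (X 0 * X 1) : MvPolynomial (Fin 3) k) * hι2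
    exact h ▸ J.mul_mem_left _ hJ2
  have he : (27 * φ ^ 3 - ψ ^ 3 : k) ≠ 0 := sub_ne_zero.mpr (Ne.symm hψφ)
  have hCe : (C (27 * φ ^ 3 - ψ ^ 3) : MvPolynomial (Fin 3) k) = 27 * C φ ^ 3 - C ψ ^ 3 := by
    simp [map_sub, map_mul, map_pow, map_ofNat]
  have redJ : ∀ p q : MvPolynomial (Fin 3) k, C (27 * φ ^ 3 - ψ ^ 3) * p = q → q ∈ J → p ∈ J := by
    intro p q h hq
    have hp : p = C (27 * φ ^ 3 - ψ ^ 3)⁻¹ * q := by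
      rw [← h, ← mul_assoc, ← map_mul, inv_mul_cancel₀ he, map_one, one_mul]
    rw [hp]; exact J.mul_mem_left _ hq
  -- the six "square times other variable" monomials lie in J
  have h001 : (X 0 ^ 2 * X 1 : MvPolynomial (Fin 3) k) ∈ J :=
    redJ _ (9 * C φ ^ 2 * X 1 * (3 * C φ * X 0 ^ 2 - C ψ * (X 1 * X 2))
        + 3 * C φ * C ψ * X 2 * (3 * C φ * X 1 ^ 2 - C ψ * (X 0 * X 2))
        + C ψ ^ 2 * X 0 * (3 * C φ * X 2 ^ 2 - C ψ * (X 0 * X 1)))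
      (by linear_combination (X 0 ^ 2 * X 1 : MvPolynomial (Fin 3) k) * hCe)
      (add_mem (add_mem (J.mul_mem_left _ hG0) (J.mul_mem_left _ hG1)) (J.mul_mem_left _ hG2))
  have h002 : (X 0 ^ 2 * X 2 : MvPolynomial (Fin 3) k) ∈ J :=
    redJ _ (9 * C φ ^ 2 * X 2 * (3 * C φ * X 0 ^ 2 - C ψ * (X 1 * X 2))
        + 3 * C φ * C ψ * X 1 * (3 * C φ * X 2 ^ 2 - C ψ * (X 0 * X 1))
        + C ψ ^ 2 * X 0 * (3 * C φ * X 1 ^ 2 - C ψ * (X 0 * X 2)))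
      (by linear_combination (X 0 ^ 2 * X 2 : MvPolynomial (Fin 3) k) * hCe)
      (add_mem (add_mem (J.mul_mem_left _ hG0) (J.mul_mem_left _ hG2)) (J.mul_mem_left _ hG1))
  have h112 : (X 1 ^ 2 * X 2 : MvPolynomial (Fin 3) k) ∈ J :=
    redJ _ (9 * C φ ^ 2 * X 2 * (3 * C φ * X 1 ^ 2 - C ψ * (X 0 * X 2))
        + 3 * C φ * C ψ * X 0 * (3 * C φ * X 2 ^ 2 - C ψ * (X 0 * X 1))
        + C ψ ^ 2 * X 1 * (3 * C φ * X 0 ^ 2 - C ψ * (X 1 * X 2)))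
      (by linear_combination (X 1 ^ 2 * X 2 : MvPolynomial (Fin 3) k) * hCe)
      (add_mem (add_mem (J.mul_mem_left _ hG1) (J.mul_mem_left _ hG2)) (J.mul_mem_left _ hG0))
  have h110 : (X 1 ^ 2 * X 0 : MvPolynomial (Fin 3) k) ∈ J :=
    redJ _ (9 * C φ ^ 2 * X 0 * (3 * C φ * X 1 ^ 2 - C ψ * (X 0 * X 2))
        + 3 * C φ * C ψ * X 2 * (3 * C φ * X 0 ^ 2 - C ψ * (X 1 * X 2))
        + C ψ ^ 2 * X 1 * (3 * C φ * X 2 ^ 2 - C ψ * (X 0 * X 1)))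
      (by linear_combination (X 1 ^ 2 * X 0 : MvPolynomial (Fin 3) k) * hCe)
      (add_mem (add_mem (J.mul_mem_left _ hG1) (J.mul_mem_left _ hG0)) (J.mul_mem_left _ hG2))
  have h220 : (X 2 ^ 2 * X 0 : MvPolynomial (Fin 3) k) ∈ J :=
    redJ _ (9 * C φ ^ 2 * X 0 * (3 * C φ * X 2 ^ 2 - C ψ * (X 0 * X 1))
        + 3 * C φ * C ψ * X 1 * (3 * C φ * X 0 ^ 2 - C ψ * (X 1 * X 2))
        + C ψ ^ 2 * X 2 * (3 * C φ * X 1 ^ 2 - C ψ * (X 0 * X 2)))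
      (by linear_combination (X 2 ^ 2 * X 0 : MvPolynomial (Fin 3) k) * hCe)
      (add_mem (add_mem (J.mul_mem_left _ hG2) (J.mul_mem_left _ hG0)) (J.mul_mem_left _ hG1))
  have h221 : (X 2 ^ 2 * X 1 : MvPolynomial (Fin 3) k) ∈ J :=
    redJ _ (9 * C φ ^ 2 * X 1 * (3 * C φ * X 2 ^ 2 - C ψ * (X 0 * X 1))
        + 3 * C φ * C ψ * X 0 * (3 * C φ * X 1 ^ 2 - C ψ * (X 0 * X 2))
        + C ψ ^ 2 * X 2 * (3 * C φ * X 0 ^ 2 - C ψ * (X 1 * X 2)))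
      (by linear_combination (X 2 ^ 2 * X 1 : MvPolynomial (Fin 3) k) * hCe)
      (add_mem (add_mem (J.mul_mem_left _ hG2) (J.mul_mem_left _ hG1)) (J.mul_mem_left _ hG0))
  -- X i * (X 0 * X 1 * X 2) ∈ J
  have hq0 : (X 0 * (X 0 * X 1 * X 2) : MvPolynomial (Fin 3) k) ∈ J := by
    have := J.mul_mem_right (X 2) h001
    rwa [show (X 0 ^ 2 * X 1 * X 2 : MvPolynomial (Fin 3) k) = X 0 * (X 0 * X 1 * X 2) from by ring] at this
  have hq1 : (X 1 * (X 0 * X 1 * X 2) : MvPolynomial (Fin 3) k) ∈ J := by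
    have := J.mul_mem_right (X 2) h110
    rwa [show (X 1 ^ 2 * X 0 * X 2 : MvPolynomial (Fin 3) k) = X 1 * (X 0 * X 1 * X 2) from by ring] at this
  have hq2 : (X 2 * (X 0 * X 1 * X 2) : MvPolynomial (Fin 3) k) ∈ J := by
    have := J.mul_mem_right (X 1) h220
    rwa [show (X 2 ^ 2 * X 0 * X 1 : MvPolynomial (Fin 3) k) = X 2 * (X 0 * X 1 * X 2) from by ring] at this
  -- the spanning submodule
  set S : Set (MvPolynomial (Fin 3) k) := {1, X 0, X 1, X 2, X 0 ^ 2, X 1 ^ 2, X 2 ^ 2, X 0 * X 1 * X 2} with hS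
  set M : Submodule k (MvPolynomial (Fin 3) k) := Submodule.span k S ⊔ Submodule.restrictScalars k J with hM
  have hJM : ∀ p : MvPolynomial (Fin 3) k, p ∈ J → p ∈ M := fun p hp => Submodule.mem_sup_right hp
  have hSM : ∀ p : MvPolynomial (Fin 3) k, p ∈ S → p ∈ M := fun p hp =>
    Submodule.mem_sup_left (Submodule.subset_span hp)
  have hψC : (C ψ⁻¹ : MvPolynomial (Fin 3) k) * C ψ = 1 := by
    rw [← map_mul, inv_mul_cancel₀ hψ, map_one]
  have h3φ : (3 * φ : k) ≠ 0 := mul_ne_zero three_ne_zero hφ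
  have hφC : (C (3 * φ)⁻¹ : MvPolynomial (Fin 3) k) * (3 * C φ) = 1 := by
    rw [show ((3 : MvPolynomial (Fin 3) k) * C φ) = C (3 * φ) from by rw [map_mul, map_ofNat],
      ← map_mul, inv_mul_cancel₀ h3φ, map_one]
  -- products of two distinct variables
  have h01 : (X 0 * X 1 : MvPolynomial (Fin 3) k) ∈ M := by
    have e : (X 0 * X 1 : MvPolynomial (Fin 3) k) = (3 * φ * ψ⁻¹) • (X 2 ^ 2 : MvPolynomial (Fin 3) k)
        + (-ψ⁻¹) • (3 * C φ * X 2 ^ 2 - C ψ * (X 0 * X 1)) := by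
      simp only [smul_eq_C_mul, map_mul, map_neg, map_ofNat]
      linear_combination (-(X 0 * X 1) : MvPolynomial (Fin 3) k) * hψC
    rw [e]
    exact add_mem (Submodule.smul_mem _ _ (hSM _ (by simp only [hS, Set.mem_insert_iff, Set.mem_singleton_iff]; tauto)))
      (Submodule.smul_mem _ _ (hJM _ hG2))
  have h02 : (X 0 * X 2 : MvPolynomial (Fin 3) k) ∈ M := by
    have e : (X 0 * X 2 : MvPolynomial (Fin 3) k) = (3 * φ * ψ⁻¹) • (X 1 ^ 2 : MvPolynomial (Fin 3) k)
        + (-ψ⁻¹) • (3 * C φ * X 1 ^ 2 - C ψ * (X 0 * X 2)) := by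
      simp only [smul_eq_C_mul, map_mul, map_neg, map_ofNat]
      linear_combination (-(X 0 * X 2) : MvPolynomial (Fin 3) k) * hψC
    rw [e]
    exact add_mem (Submodule.smul_mem _ _ (hSM _ (by simp only [hS, Set.mem_insert_iff, Set.mem_singleton_iff]; tauto)))
      (Submodule.smul_mem _ _ (hJM _ hG1))
  have h12 : (X 1 * X 2 : MvPolynomial (Fin 3) k) ∈ M := by
    have e : (X 1 * X 2 : MvPolynomial (Fin 3) k) = (3 * φ * ψ⁻¹) • (X 0 ^ 2 : MvPolynomial (Fin 3) k)
        + (-ψ⁻¹) • (3 * C φ * X 0 ^ 2 - C ψ * (X 1 * X 2)) := by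
      simp only [smul_eq_C_mul, map_mul, map_neg, map_ofNat]
      linear_combination (-(X 1 * X 2) : MvPolynomial (Fin 3) k) * hψC
    rw [e]
    exact add_mem (Submodule.smul_mem _ _ (hSM _ (by simp only [hS, Set.mem_insert_iff, Set.mem_singleton_iff]; tauto)))
      (Submodule.smul_mem _ _ (hJM _ hG0))
  -- cubes
  have h000 : (X 0 ^ 3 : MvPolynomial (Fin 3) k) ∈ M := by
    have e : (X 0 ^ 3 : MvPolynomial (Fin 3) k) = (ψ * (3 * φ)⁻¹) • (X 0 * X 1 * X 2 : MvPolynomial (Fin 3) k)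
        + ((3 * φ)⁻¹) • (X 0 * (3 * C φ * X 0 ^ 2 - C ψ * (X 1 * X 2))) := by
      simp only [smul_eq_C_mul, map_mul, map_ofNat]
      linear_combination (-(X 0 ^ 3) : MvPolynomial (Fin 3) k) * hφC
    rw [e]
    exact add_mem (Submodule.smul_mem _ _ (hSM _ (by simp only [hS, Set.mem_insert_iff, Set.mem_singleton_iff]; exact Or.inr (Or.inr (Or.inr (Or.inr (Or.inr (Or.inr (Or.inr trivial)))))))))
      (Submodule.smul_mem _ _ (hJM _ (J.mul_mem_left _ hG0)))
  have h111 : (X 1 ^ 3 : MvPolynomial (Fin 3) k) ∈ M := by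
    have e : (X 1 ^ 3 : MvPolynomial (Fin 3) k) = (ψ * (3 * φ)⁻¹) • (X 0 * X 1 * X 2 : MvPolynomial (Fin 3) k)
        + ((3 * φ)⁻¹) • (X 1 * (3 * C φ * X 1 ^ 2 - C ψ * (X 0 * X 2))) := by
      simp only [smul_eq_C_mul, map_mul, map_ofNat]
      linear_combination (-(X 1 ^ 3) : MvPolynomial (Fin 3) k) * hφC
    rw [e]
    exact add_mem (Submodule.smul_mem _ _ (hSM _ (by simp only [hS, Set.mem_insert_iff, Set.mem_singleton_iff]; exact Or.inr (Or.inr (Or.inr (Or.inr (Or.inr (Or.inr (Or.inr trivial)))))))))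
      (Submodule.smul_mem _ _ (hJM _ (J.mul_mem_left _ hG1)))
  have h222 : (X 2 ^ 3 : MvPolynomial (Fin 3) k) ∈ M := by
    have e : (X 2 ^ 3 : MvPolynomial (Fin 3) k) = (ψ * (3 * φ)⁻¹) • (X 0 * X 1 * X 2 : MvPolynomial (Fin 3) k)
        + ((3 * φ)⁻¹) • (X 2 * (3 * C φ * X 2 ^ 2 - C ψ * (X 0 * X 1))) := by
      simp only [smul_eq_C_mul, map_mul, map_ofNat]
      linear_combination (-(X 2 ^ 3) : MvPolynomial (Fin 3) k) * hφC
    rw [e]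
    exact add_mem (Submodule.smul_mem _ _ (hSM _ (by simp only [hS, Set.mem_insert_iff, Set.mem_singleton_iff]; exact Or.inr (Or.inr (Or.inr (Or.inr (Or.inr (Or.inr (Or.inr trivial)))))))))
      (Submodule.smul_mem _ _ (hJM _ (J.mul_mem_left _ hG2)))
  -- M is closed under multiplication by variables
  have hX : ∀ i : Fin 3, ∀ p : MvPolynomial (Fin 3) k, p ∈ M → X i * p ∈ M := by
    intro i p hp
    obtain ⟨y, hy, z, hz, rfl⟩ := Submodule.mem_sup.mp hp
    rw [mul_add]
    refine add_mem ?_ (hJM _ (J.mul_mem_left _ hz))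
    clear hp
    induction hy using Submodule.span_induction with
    | mem w hw =>
      fin_cases i <;>
        simp only [hS, Set.mem_insert_iff, Set.mem_singleton_iff] at hw <;>
        rcases hw with rfl | rfl | rfl | rfl | rfl | rfl | rfl | rfl
      · rw [mul_one]; exact hSM _ (by simp only [hS, Set.mem_insert_iff, Set.mem_singleton_iff]; tauto)
      · exact (show (X 0 * X 0 : MvPolynomial (Fin 3) k) = X 0 ^ 2 from by ring) ▸ hSM _ (by simp only [hS, Set.mem_insert_iff, Set.mem_singleton_iff]; tauto)
      · exact h01
      · exact h02
      · exact (show (X 0 * X 0 ^ 2 : MvPolynomial (Fin 3) k) = X 0 ^ 3 from by ring) ▸ h000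
      · exact hJM _ ((show (X 1 ^ 2 * X 0 : MvPolynomial (Fin 3) k) = X 0 * X 1 ^ 2 from by ring) ▸ h110)
      · exact hJM _ ((show (X 2 ^ 2 * X 0 : MvPolynomial (Fin 3) k) = X 0 * X 2 ^ 2 from by ring) ▸ h220)
      · exact hJM _ hq0
      · rw [mul_one]; exact hSM _ (by simp only [hS, Set.mem_insert_iff, Set.mem_singleton_iff]; tauto)
      · exact (show (X 1 * X 0 : MvPolynomial (Fin 3) k) = X 0 * X 1 from by ring) ▸ h01
      · exact (show (X 1 * X 1 : MvPolynomial (Fin 3) k) = X 1 ^ 2 from by ring) ▸ hSM _ (by simp only [hS, Set.mem_insert_iff, Set.mem_singleton_iff]; tauto)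
      · exact h12
      · exact hJM _ ((show (X 0 ^ 2 * X 1 : MvPolynomial (Fin 3) k) = X 1 * X 0 ^ 2 from by ring) ▸ h001)
      · exact (show (X 1 * X 1 ^ 2 : MvPolynomial (Fin 3) k) = X 1 ^ 3 from by ring) ▸ h111
      · exact hJM _ ((show (X 2 ^ 2 * X 1 : MvPolynomial (Fin 3) k) = X 1 * X 2 ^ 2 from by ring) ▸ h221)
      · exact hJM _ hq1
      · rw [mul_one]; exact hSM _ (by simp only [hS, Set.mem_insert_iff, Set.mem_singleton_iff]; tauto)
      · exact (show (X 2 * X 0 : MvPolynomial (Fin 3) k) = X 0 * X 2 from by ring) ▸ h02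
      · exact (show (X 2 * X 1 : MvPolynomial (Fin 3) k) = X 1 * X 2 from by ring) ▸ h12
      · exact (show (X 2 * X 2 : MvPolynomial (Fin 3) k) = X 2 ^ 2 from by ring) ▸ hSM _ (by simp only [hS, Set.mem_insert_iff, Set.mem_singleton_iff]; tauto)
      · exact hJM _ ((show (X 0 ^ 2 * X 2 : MvPolynomial (Fin 3) k) = X 2 * X 0 ^ 2 from by ring) ▸ h002)
      · exact hJM _ ((show (X 1 ^ 2 * X 2 : MvPolynomial (Fin 3) k) = X 2 * X 1 ^ 2 from by ring) ▸ h112)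
      · exact (show (X 2 * X 2 ^ 2 : MvPolynomial (Fin 3) k) = X 2 ^ 3 from by ring) ▸ h222
      · exact hJM _ hq2
    | zero => rw [mul_zero]; exact zero_mem M
    | add a b ha hb iha ihb => rw [mul_add]; exact add_mem iha ihb
    | smul a x hx ihx => rw [mul_smul_comm]; exact Submodule.smul_mem _ _ ihx
  -- every polynomial lies in M
  have hall : ∀ p : MvPolynomial (Fin 3) k, p ∈ M := by
    intro p
    induction p using MvPolynomial.induction_on with
    | C a =>
      have : (C a : MvPolynomial (Fin 3) k) = a • (1 : MvPolynomial (Fin 3) k) := by rw [smul_eq_C_mul, mul_one]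
      rw [this]; exact Submodule.smul_mem _ _ (hSM _ (by simp only [hS, Set.mem_insert_iff, Set.mem_singleton_iff]; tauto))
    | add p q hp hq => exact add_mem hp hq
    | mul_X p i hp => rw [mul_comm]; exact hX i p hp
  -- conclude
  rw [eq_top_iff]
  rintro x -
  obtain ⟨p, rfl⟩ := Ideal.Quotient.mk_surjective x
  obtain ⟨y, hy, z, hz, rfl⟩ := Submodule.mem_sup.mp (hall p)
  rw [RingHom.map_add, Ideal.Quotient.eq_zero_iff_mem.mpr hz, add_zero]
  have hmap : Ideal.Quotient.mk J y ∈
      Submodule.map (Ideal.Quotient.mkₐ k J).toLinearMap (Submodule.span k S) :=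
    ⟨y, hy, rfl⟩
  rw [Submodule.map_span] at hmap
  refine Submodule.span_le.mpr ?_ hmap
  rintro u ⟨w, hw, rfl⟩
  simp only [hS, Set.mem_insert_iff, Set.mem_singleton_iff] at hw
  rcases hw with rfl | rfl | rfl | rfl | rfl | rfl | rfl | rfl <;>
    exact Submodule.subset_span (by simp only [Set.mem_insert_iff, Set.mem_singleton_iff]; tauto)
end

section
/- Assume φ ≠ 0, ψ ≠ 0 and ψ³ ≠ 27φ³. Let σ be the k-algebra automorphism of k[x₁,x₂,x₃] determined by σ(xᵢ) = ρ·xᵢ for i = 1, 2, 3. Then σ maps the Jacobian ideal J into itself, so it induces a k-linear automorphism σ̄ of Jac(W) = k[x₁,x₂,x₃]/J, and the subspace of σ̄-fixed elements of Jac(W) is spanned over k by the classes of 1 and x₁x₂x₃. (This identifies the ℤ/3-invariant part of Jac(W), i.e. the untwisted sector of the orbifold Jacobian algebra Jac(W, ℤ/3).) -/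
open MvPolynomial

private theorem stmt8_mono_eq {k : Type*} [CommRing k] (u : Fin 3 →₀ ℕ) (a : k) :
    monomial u a = C a * (X 0 ^ (u 0) * X 1 ^ (u 1) * X 2 ^ (u 2)) := by
  rw [monomial_eq, Finsupp.prod_fintype _ _ (fun i => pow_zero _), Fin.prod_univ_three]

private theorem stmt8_mk_C_mul {k : Type*} [CommRing k] (J : Ideal (MvPolynomial (Fin 3) k))
    (a : k) (p : MvPolynomial (Fin 3) k) :
    Ideal.Quotient.mk J (C a * p) = a • Ideal.Quotient.mk J p := by
  rw [map_mul, ← algebraMap_eq, Ideal.Quotient.mk_algebraMap, ← Algebra.smul_def]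

private theorem stmt8_cancel {k : Type*} [Field k] {c : k} (J : Ideal (MvPolynomial (Fin 3) k))
    (hc : c ≠ 0) {p : MvPolynomial (Fin 3) k} (h : C c * p ∈ J) : p ∈ J := by
  have h2 := Ideal.mul_mem_left J (C c⁻¹) h
  rwa [← mul_assoc, ← map_mul, inv_mul_cancel₀ hc, C_1, one_mul] at h2

private theorem stmt8_chain {k : Type*} [Field k] (J : Ideal (MvPolynomial (Fin 3) k)) {c : k}
    (hc : 1 - c ^ 3 ≠ 0) {u v w : MvPolynomial (Fin 3) k}
    (h1 : u ^ 2 - C c * (v * w) ∈ J) (h2 : v ^ 2 - C c * (w * u) ∈ J)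
    (h3 : w ^ 2 - C c * (u * v) ∈ J) : u ^ 2 * v ∈ J := by
  apply stmt8_cancel J hc
  have e : C (1 - c ^ 3) * (u ^ 2 * v)
      = v * (u ^ 2 - C c * (v * w)) + C c * w * (v ^ 2 - C c * (w * u))
        + C c ^ 2 * u * (w ^ 2 - C c * (u * v)) := by
    rw [map_sub, map_one, map_pow]; ring
  rw [e]
  exact add_mem (add_mem (Ideal.mul_mem_left _ _ h1) (Ideal.mul_mem_left _ _ h2))
    (Ideal.mul_mem_left _ _ h3)

private theorem stmt8_deg4 {k : Type*} [Field k] (J : Ideal (MvPolynomial (Fin 3) k)) {c : k}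
    (h0 : (X 0 : MvPolynomial (Fin 3) k) ^ 2 - C c * (X 1 * X 2) ∈ J)
    (h1 : (X 1 : MvPolynomial (Fin 3) k) ^ 2 - C c * (X 2 * X 0) ∈ J)
    (h2 : (X 2 : MvPolynomial (Fin 3) k) ^ 2 - C c * (X 0 * X 1) ∈ J)
    (h01 : (X 0 : MvPolynomial (Fin 3) k) ^ 2 * X 1 ∈ J)
    (h02 : (X 0 : MvPolynomial (Fin 3) k) ^ 2 * X 2 ∈ J)
    (h10 : (X 1 : MvPolynomial (Fin 3) k) ^ 2 * X 0 ∈ J)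
    (h12 : (X 1 : MvPolynomial (Fin 3) k) ^ 2 * X 2 ∈ J)
    (h20 : (X 2 : MvPolynomial (Fin 3) k) ^ 2 * X 0 ∈ J)
    (h21 : (X 2 : MvPolynomial (Fin 3) k) ^ 2 * X 1 ∈ J) :
    ∀ a b d : ℕ, 4 ≤ a + b + d → (X 0 : MvPolynomial (Fin 3) k) ^ a * X 1 ^ b * X 2 ^ d ∈ J := by
  have q0 : (X 0 : MvPolynomial (Fin 3) k) ^ 4 ∈ J := by
    have e : (X 0 : MvPolynomial (Fin 3) k) ^ 4
        = X 0 ^ 2 * (X 0 ^ 2 - C c * (X 1 * X 2)) + C c * (X 2 * (X 0 ^ 2 * X 1)) := by ring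
    rw [e]; exact add_mem (Ideal.mul_mem_left _ _ h0) (Ideal.mul_mem_left _ _ (Ideal.mul_mem_left _ _ h01))
  have q1 : (X 1 : MvPolynomial (Fin 3) k) ^ 4 ∈ J := by
    have e : (X 1 : MvPolynomial (Fin 3) k) ^ 4
        = X 1 ^ 2 * (X 1 ^ 2 - C c * (X 2 * X 0)) + C c * (X 0 * (X 1 ^ 2 * X 2)) := by ring
    rw [e]; exact add_mem (Ideal.mul_mem_left _ _ h1) (Ideal.mul_mem_left _ _ (Ideal.mul_mem_left _ _ h12))
  have q2 : (X 2 : MvPolynomial (Fin 3) k) ^ 4 ∈ J := by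
    have e : (X 2 : MvPolynomial (Fin 3) k) ^ 4
        = X 2 ^ 2 * (X 2 ^ 2 - C c * (X 0 * X 1)) + C c * (X 1 * (X 2 ^ 2 * X 0)) := by ring
    rw [e]; exact add_mem (Ideal.mul_mem_left _ _ h2) (Ideal.mul_mem_left _ _ (Ideal.mul_mem_left _ _ h20))
  intro a b d h
  by_cases ha : 2 ≤ a
  · by_cases hb : 1 ≤ b
    · obtain ⟨a', rfl⟩ : ∃ t, a = t + 2 := ⟨a - 2, by omega⟩
      obtain ⟨b', rfl⟩ : ∃ t, b = t + 1 := ⟨b - 1, by omega⟩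
      have e : (X 0 : MvPolynomial (Fin 3) k) ^ (a' + 2) * X 1 ^ (b' + 1) * X 2 ^ d
          = (X 0 ^ a' * X 1 ^ b' * X 2 ^ d) * (X 0 ^ 2 * X 1) := by ring
      rw [e]; exact Ideal.mul_mem_left _ _ h01
    · by_cases hd : 1 ≤ d
      · obtain ⟨a', rfl⟩ : ∃ t, a = t + 2 := ⟨a - 2, by omega⟩
        obtain ⟨d', rfl⟩ : ∃ t, d = t + 1 := ⟨d - 1, by omega⟩
        have e : (X 0 : MvPolynomial (Fin 3) k) ^ (a' + 2) * X 1 ^ b * X 2 ^ (d' + 1)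
            = (X 0 ^ a' * X 1 ^ b * X 2 ^ d') * (X 0 ^ 2 * X 2) := by ring
        rw [e]; exact Ideal.mul_mem_left _ _ h02
      · obtain ⟨a', rfl⟩ : ∃ t, a = t + 4 := ⟨a - 4, by omega⟩
        have e : (X 0 : MvPolynomial (Fin 3) k) ^ (a' + 4) * X 1 ^ b * X 2 ^ d
            = (X 0 ^ a' * X 1 ^ b * X 2 ^ d) * X 0 ^ 4 := by ring
        rw [e]; exact Ideal.mul_mem_left _ _ q0
  · by_cases hb : 2 ≤ b
    · by_cases ha1 : 1 ≤ a
      · obtain ⟨b', rfl⟩ : ∃ t, b = t + 2 := ⟨b - 2, by omega⟩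
        obtain ⟨a', rfl⟩ : ∃ t, a = t + 1 := ⟨a - 1, by omega⟩
        have e : (X 0 : MvPolynomial (Fin 3) k) ^ (a' + 1) * X 1 ^ (b' + 2) * X 2 ^ d
            = (X 0 ^ a' * X 1 ^ b' * X 2 ^ d) * (X 1 ^ 2 * X 0) := by ring
        rw [e]; exact Ideal.mul_mem_left _ _ h10
      · by_cases hd : 1 ≤ d
        · obtain ⟨b', rfl⟩ : ∃ t, b = t + 2 := ⟨b - 2, by omega⟩
          obtain ⟨d', rfl⟩ : ∃ t, d = t + 1 := ⟨d - 1, by omega⟩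
          have e : (X 0 : MvPolynomial (Fin 3) k) ^ a * X 1 ^ (b' + 2) * X 2 ^ (d' + 1)
              = (X 0 ^ a * X 1 ^ b' * X 2 ^ d') * (X 1 ^ 2 * X 2) := by ring
          rw [e]; exact Ideal.mul_mem_left _ _ h12
        · obtain ⟨b', rfl⟩ : ∃ t, b = t + 4 := ⟨b - 4, by omega⟩
          have e : (X 0 : MvPolynomial (Fin 3) k) ^ a * X 1 ^ (b' + 4) * X 2 ^ d
              = (X 0 ^ a * X 1 ^ b' * X 2 ^ d) * X 1 ^ 4 := by ring
          rw [e]; exact Ideal.mul_mem_left _ _ q1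
    · have hd : 2 ≤ d := by omega
      by_cases ha1 : 1 ≤ a
      · obtain ⟨d', rfl⟩ : ∃ t, d = t + 2 := ⟨d - 2, by omega⟩
        obtain ⟨a', rfl⟩ : ∃ t, a = t + 1 := ⟨a - 1, by omega⟩
        have e : (X 0 : MvPolynomial (Fin 3) k) ^ (a' + 1) * X 1 ^ b * X 2 ^ (d' + 2)
            = (X 0 ^ a' * X 1 ^ b * X 2 ^ d') * (X 2 ^ 2 * X 0) := by ring
        rw [e]; exact Ideal.mul_mem_left _ _ h20
      · by_cases hb1 : 1 ≤ b
        · obtain ⟨d', rfl⟩ : ∃ t, d = t + 2 := ⟨d - 2, by omega⟩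
          obtain ⟨b', rfl⟩ : ∃ t, b = t + 1 := ⟨b - 1, by omega⟩
          have e : (X 0 : MvPolynomial (Fin 3) k) ^ a * X 1 ^ (b' + 1) * X 2 ^ (d' + 2)
              = (X 0 ^ a * X 1 ^ b' * X 2 ^ d') * (X 2 ^ 2 * X 1) := by ring
          rw [e]; exact Ideal.mul_mem_left _ _ h21
        · obtain ⟨d', rfl⟩ : ∃ t, d = t + 4 := ⟨d - 4, by omega⟩
          have e : (X 0 : MvPolynomial (Fin 3) k) ^ a * X 1 ^ b * X 2 ^ (d' + 4)
              = (X 0 ^ a * X 1 ^ b * X 2 ^ d') * X 2 ^ 4 := by ring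
          rw [e]; exact Ideal.mul_mem_left _ _ q2

set_option maxHeartbeats 1000000 in
private theorem stmt8_span {k : Type*} [Field k] (J : Ideal (MvPolynomial (Fin 3) k)) {c : k}
    (hc : 1 - c ^ 3 ≠ 0)
    (h0 : (X 0 : MvPolynomial (Fin 3) k) ^ 2 - C c * (X 1 * X 2) ∈ J)
    (h1 : (X 1 : MvPolynomial (Fin 3) k) ^ 2 - C c * (X 2 * X 0) ∈ J)
    (h2 : (X 2 : MvPolynomial (Fin 3) k) ^ 2 - C c * (X 0 * X 1) ∈ J) :
    ∀ a b d : ℕ, 3 ∣ (a + b + d) →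
      Ideal.Quotient.mk J ((X 0 : MvPolynomial (Fin 3) k) ^ a * X 1 ^ b * X 2 ^ d)
        ∈ Submodule.span k
            ({Ideal.Quotient.mk J 1, Ideal.Quotient.mk J (X 0 * X 1 * X 2)} :
              Set (MvPolynomial (Fin 3) k ⧸ J)) := by
  have h0' : (X 0 : MvPolynomial (Fin 3) k) ^ 2 - C c * (X 2 * X 1) ∈ J := by
    rw [mul_comm (X 2 : MvPolynomial (Fin 3) k) (X 1)]; exact h0
  have h1' : (X 1 : MvPolynomial (Fin 3) k) ^ 2 - C c * (X 0 * X 2) ∈ J := by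
    rw [mul_comm (X 0 : MvPolynomial (Fin 3) k) (X 2)]; exact h1
  have h2' : (X 2 : MvPolynomial (Fin 3) k) ^ 2 - C c * (X 1 * X 0) ∈ J := by
    rw [mul_comm (X 1 : MvPolynomial (Fin 3) k) (X 0)]; exact h2
  have h01 : (X 0 : MvPolynomial (Fin 3) k) ^ 2 * X 1 ∈ J := stmt8_chain J hc h0 h1 h2
  have h12 : (X 1 : MvPolynomial (Fin 3) k) ^ 2 * X 2 ∈ J := stmt8_chain J hc h1 h2 h0
  have h20 : (X 2 : MvPolynomial (Fin 3) k) ^ 2 * X 0 ∈ J := stmt8_chain J hc h2 h0 h1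
  have h02 : (X 0 : MvPolynomial (Fin 3) k) ^ 2 * X 2 ∈ J := stmt8_chain J hc h0' h2' h1'
  have h21 : (X 2 : MvPolynomial (Fin 3) k) ^ 2 * X 1 ∈ J := stmt8_chain J hc h2' h1' h0'
  have h10 : (X 1 : MvPolynomial (Fin 3) k) ^ 2 * X 0 ∈ J := stmt8_chain J hc h1' h0' h2'
  have c0 : (X 0 : MvPolynomial (Fin 3) k) ^ 3 - C c * (X 0 * X 1 * X 2) ∈ J := by
    have e : (X 0 : MvPolynomial (Fin 3) k) ^ 3 - C c * (X 0 * X 1 * X 2)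
        = X 0 * (X 0 ^ 2 - C c * (X 1 * X 2)) := by ring
    rw [e]; exact Ideal.mul_mem_left _ _ h0
  have c1 : (X 1 : MvPolynomial (Fin 3) k) ^ 3 - C c * (X 0 * X 1 * X 2) ∈ J := by
    have e : (X 1 : MvPolynomial (Fin 3) k) ^ 3 - C c * (X 0 * X 1 * X 2)
        = X 1 * (X 1 ^ 2 - C c * (X 2 * X 0)) := by ring
    rw [e]; exact Ideal.mul_mem_left _ _ h1
  have c2 : (X 2 : MvPolynomial (Fin 3) k) ^ 3 - C c * (X 0 * X 1 * X 2) ∈ J := by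
    have e : (X 2 : MvPolynomial (Fin 3) k) ^ 3 - C c * (X 0 * X 1 * X 2)
        = X 2 * (X 2 ^ 2 - C c * (X 0 * X 1)) := by ring
    rw [e]; exact Ideal.mul_mem_left _ _ h2
  intro a b d hdvd
  by_cases h4 : 4 ≤ a + b + d
  · rw [Ideal.Quotient.eq_zero_iff_mem.mpr
      (stmt8_deg4 J h0 h1 h2 h01 h02 h10 h12 h20 h21 a b d h4)]
    exact zero_mem _
  · have hcase : a + b + d = 0 ∨ a + b + d = 3 := by omega
    rcases hcase with hz | h3
    · obtain ⟨rfl, rfl, rfl⟩ : a = 0 ∧ b = 0 ∧ d = 0 := by omega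
      rw [show ((X 0 : MvPolynomial (Fin 3) k) ^ 0 * X 1 ^ 0 * X 2 ^ 0) = 1 by ring]
      exact Submodule.subset_span (Set.mem_insert _ _)
    · have hmem : Ideal.Quotient.mk J ((X 0 : MvPolynomial (Fin 3) k) * X 1 * X 2)
          ∈ Submodule.span k
            ({Ideal.Quotient.mk J 1, Ideal.Quotient.mk J (X 0 * X 1 * X 2)} :
              Set (MvPolynomial (Fin 3) k ⧸ J)) :=
        Submodule.subset_span (Set.mem_insert_iff.mpr (Or.inr rfl))
      have cube : ∀ p : MvPolynomial (Fin 3) k, p - C c * (X 0 * X 1 * X 2) ∈ J →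
          Ideal.Quotient.mk J p ∈ Submodule.span k
            ({Ideal.Quotient.mk J 1, Ideal.Quotient.mk J (X 0 * X 1 * X 2)} :
              Set (MvPolynomial (Fin 3) k ⧸ J)) := by
        intro p hp
        rw [Ideal.Quotient.eq.mpr hp, stmt8_mk_C_mul]
        exact Submodule.smul_mem _ _ hmem
      have zmem : ∀ p : MvPolynomial (Fin 3) k, p ∈ J →
          Ideal.Quotient.mk J p ∈ Submodule.span k
            ({Ideal.Quotient.mk J 1, Ideal.Quotient.mk J (X 0 * X 1 * X 2)} :
              Set (MvPolynomial (Fin 3) k ⧸ J)) := by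
        intro p hp
        rw [Ideal.Quotient.eq_zero_iff_mem.mpr hp]; exact zero_mem _
      have ha : a ≤ 3 := by omega
      have hb : b ≤ 3 := by omega
      have hd : d ≤ 3 := by omega
      interval_cases a <;> interval_cases b <;> interval_cases d <;>
        first
          | omega
          | (rw [show ((X 0 : MvPolynomial (Fin 3) k) ^ 3 * X 1 ^ 0 * X 2 ^ 0) = X 0 ^ 3
              from by ring]; exact cube _ c0)
          | (rw [show ((X 0 : MvPolynomial (Fin 3) k) ^ 0 * X 1 ^ 3 * X 2 ^ 0) = X 1 ^ 3
              from by ring]; exact cube _ c1)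
          | (rw [show ((X 0 : MvPolynomial (Fin 3) k) ^ 0 * X 1 ^ 0 * X 2 ^ 3) = X 2 ^ 3
              from by ring]; exact cube _ c2)
          | (rw [show ((X 0 : MvPolynomial (Fin 3) k) ^ 1 * X 1 ^ 1 * X 2 ^ 1)
              = X 0 * X 1 * X 2 from by ring]; exact hmem)
          | (rw [show ((X 0 : MvPolynomial (Fin 3) k) ^ 2 * X 1 ^ 1 * X 2 ^ 0) = X 0 ^ 2 * X 1
              from by ring]; exact zmem _ h01)
          | (rw [show ((X 0 : MvPolynomial (Fin 3) k) ^ 2 * X 1 ^ 0 * X 2 ^ 1) = X 0 ^ 2 * X 2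
              from by ring]; exact zmem _ h02)
          | (rw [show ((X 0 : MvPolynomial (Fin 3) k) ^ 1 * X 1 ^ 2 * X 2 ^ 0) = X 1 ^ 2 * X 0
              from by ring]; exact zmem _ h10)
          | (rw [show ((X 0 : MvPolynomial (Fin 3) k) ^ 0 * X 1 ^ 2 * X 2 ^ 1) = X 1 ^ 2 * X 2
              from by ring]; exact zmem _ h12)
          | (rw [show ((X 0 : MvPolynomial (Fin 3) k) ^ 1 * X 1 ^ 0 * X 2 ^ 2) = X 2 ^ 2 * X 0
              from by ring]; exact zmem _ h20)
          | (rw [show ((X 0 : MvPolynomial (Fin 3) k) ^ 0 * X 1 ^ 1 * X 2 ^ 2) = X 2 ^ 2 * X 1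
              from by ring]; exact zmem _ h21)

private theorem stmt8_pd {k : Type*} [Field k] (φ ι ψ : k) :
    pderiv 0 (-(C φ * C ι) * (X 0 ^ 3 + X 1 ^ 3 + X 2 ^ 3)
        + C ψ * C ι * (X 0 * X 1 * X 2) : MvPolynomial (Fin 3) k)
      = -(C φ * C ι) * (3 * X 0 ^ 2) + C ψ * C ι * (X 1 * X 2) ∧
    pderiv 1 (-(C φ * C ι) * (X 0 ^ 3 + X 1 ^ 3 + X 2 ^ 3)
        + C ψ * C ι * (X 0 * X 1 * X 2) : MvPolynomial (Fin 3) k)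
      = -(C φ * C ι) * (3 * X 1 ^ 2) + C ψ * C ι * (X 2 * X 0) ∧
    pderiv 2 (-(C φ * C ι) * (X 0 ^ 3 + X 1 ^ 3 + X 2 ^ 3)
        + C ψ * C ι * (X 0 * X 1 * X 2) : MvPolynomial (Fin 3) k)
      = -(C φ * C ι) * (3 * X 2 ^ 2) + C ψ * C ι * (X 0 * X 1) := by
  refine ⟨?_, ?_, ?_⟩ <;>
  · simp only [map_add, map_neg, Derivation.leibniz, Derivation.leibniz_pow, pderiv_X, pderiv_C,
      Pi.single_apply, smul_eq_mul]
    simp only [Fin.reduceEq, reduceIte]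
    ring

set_option maxHeartbeats 1000000 in
set_option synthInstance.maxHeartbeats 1000000 in
/-- For `W = −φι(x₁³+x₂³+x₃³) + ψι·x₁x₂x₃` with `φ ≠ 0`, `ψ ≠ 0`, `ψ³ ≠ 27φ³`, and
`σ` the `k`-algebra automorphism with `σ(xᵢ) = ρxᵢ`: `σ` maps the Jacobian ideal `J`
into itself, and any induced `k`-linear map `σ̄` on `Jac(W) = k[x₁,x₂,x₃]/J` has fixed
subspace spanned over `k` by the classes of `1` and `x₁x₂x₃`. -/
theorem stmt8 (k : Type*) [Field k] [CharZero k] (ι ρ φ ψ : k)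
    (hι : ι ^ 2 = -1) (hρ : ρ ^ 2 + ρ + 1 = 0)
    (hφ : φ ≠ 0) (hψ : ψ ≠ 0) (hψφ : ψ ^ 3 ≠ 27 * φ ^ 3)
    (W : MvPolynomial (Fin 3) k)
    (hW : W = -(C φ * C ι) * (X 0 ^ 3 + X 1 ^ 3 + X 2 ^ 3)
        + C ψ * C ι * (X 0 * X 1 * X 2))
    (J : Ideal (MvPolynomial (Fin 3) k))
    (hJ : J = Ideal.span {pderiv 0 W, pderiv 1 W, pderiv 2 W})
    (σ : MvPolynomial (Fin 3) k →ₐ[k] MvPolynomial (Fin 3) k)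
    (hσ : σ = aeval fun i => C ρ * X i) :
    (∀ p ∈ J, σ p ∈ J) ∧
    ∀ σbar : (MvPolynomial (Fin 3) k ⧸ J) →ₗ[k] (MvPolynomial (Fin 3) k ⧸ J),
      (∀ p : MvPolynomial (Fin 3) k,
          σbar (Ideal.Quotient.mk J p) = Ideal.Quotient.mk J (σ p)) →
      {x : MvPolynomial (Fin 3) k ⧸ J | σbar x = x}
        = (Submodule.span k
            ({Ideal.Quotient.mk J 1, Ideal.Quotient.mk J (X 0 * X 1 * X 2)} :
              Set (MvPolynomial (Fin 3) k ⧸ J)) : Set (MvPolynomial (Fin 3) k ⧸ J)) := by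
  have hι0 : ι ≠ 0 := by intro h; rw [h] at hι; norm_num at hι
  have h3 : (3 : k) ≠ 0 := by norm_num
  have hφ3 : (3 : k) * φ ≠ 0 := mul_ne_zero h3 hφ
  have hneg : -((3 : k) * φ * ι) ≠ 0 := neg_ne_zero.mpr (mul_ne_zero hφ3 hι0)
  set c : k := ψ / (3 * φ) with hcdef
  have hc3 : 1 - c ^ 3 ≠ 0 := by
    intro h
    apply hψφ
    have hc : (1 : k) = c ^ 3 := sub_eq_zero.mp h
    rw [hcdef] at hc
    field_simp at hc
    linear_combination -hc
  have hρ3 : ρ ^ 3 = 1 := by linear_combination (ρ - 1) * hρ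
  -- partial derivative formulas
  have hp := stmt8_pd (k := k) φ ι ψ
  rw [← hW] at hp
  obtain ⟨hp0, hp1, hp2⟩ := hp
  have g0mem : pderiv 0 W ∈ J := by rw [hJ]; exact Ideal.subset_span (by simp)
  have g1mem : pderiv 1 W ∈ J := by rw [hJ]; exact Ideal.subset_span (by simp)
  have g2mem : pderiv 2 W ∈ J := by rw [hJ]; exact Ideal.subset_span (by simp)
  have hCc : (3 : MvPolynomial (Fin 3) k) * (C φ * C c) = C ψ := by
    have hs : (3 : k) * φ * c = ψ := by rw [hcdef]; field_simp
    rw [← hs, map_mul, map_mul, map_ofNat]; ring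
  have h0 : (X 0 : MvPolynomial (Fin 3) k) ^ 2 - C c * (X 1 * X 2) ∈ J := by
    apply stmt8_cancel J hneg
    have e : C (-((3 : k) * φ * ι)) * ((X 0 : MvPolynomial (Fin 3) k) ^ 2 - C c * (X 1 * X 2))
        = pderiv 0 W := by
      rw [hp0, map_neg, map_mul, map_mul, map_ofNat]
      linear_combination (C ι * (X 1 * X 2)) * hCc
    rw [e]; exact g0mem
  have h1 : (X 1 : MvPolynomial (Fin 3) k) ^ 2 - C c * (X 2 * X 0) ∈ J := by
    apply stmt8_cancel J hneg
    have e : C (-((3 : k) * φ * ι)) * ((X 1 : MvPolynomial (Fin 3) k) ^ 2 - C c * (X 2 * X 0))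
        = pderiv 1 W := by
      rw [hp1, map_neg, map_mul, map_mul, map_ofNat]
      linear_combination (C ι * (X 2 * X 0)) * hCc
    rw [e]; exact g1mem
  have h2 : (X 2 : MvPolynomial (Fin 3) k) ^ 2 - C c * (X 0 * X 1) ∈ J := by
    apply stmt8_cancel J hneg
    have e : C (-((3 : k) * φ * ι)) * ((X 2 : MvPolynomial (Fin 3) k) ^ 2 - C c * (X 0 * X 1))
        = pderiv 2 W := by
      rw [hp2, map_neg, map_mul, map_mul, map_ofNat]
      linear_combination (C ι * (X 0 * X 1)) * hCc
    rw [e]; exact g2mem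
  subst hσ
  constructor
  · -- σ maps J into itself
    intro p hp
    have s0 : (aeval fun i => C ρ * X i : MvPolynomial (Fin 3) k →ₐ[k] _) (pderiv 0 W)
        = C ρ ^ 2 * pderiv 0 W := by
      rw [hp0]
      simp only [map_add, map_mul, map_neg, map_ofNat, map_pow, aeval_X, aeval_C, algebraMap_eq]
      ring
    have s1 : (aeval fun i => C ρ * X i : MvPolynomial (Fin 3) k →ₐ[k] _) (pderiv 1 W)
        = C ρ ^ 2 * pderiv 1 W := by
      rw [hp1]
      simp only [map_add, map_mul, map_neg, map_ofNat, map_pow, aeval_X, aeval_C, algebraMap_eq]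
      ring
    have s2 : (aeval fun i => C ρ * X i : MvPolynomial (Fin 3) k →ₐ[k] _) (pderiv 2 W)
        = C ρ ^ 2 * pderiv 2 W := by
      rw [hp2]
      simp only [map_add, map_mul, map_neg, map_ofNat, map_pow, aeval_X, aeval_C, algebraMap_eq]
      ring
    rw [hJ] at hp
    induction hp using Submodule.span_induction with
    | mem g hg =>
      simp only [Set.mem_insert_iff, Set.mem_singleton_iff] at hg
      rcases hg with rfl | rfl | rfl
      · rw [s0]; exact Ideal.mul_mem_left _ _ g0mem
      · rw [s1]; exact Ideal.mul_mem_left _ _ g1mem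
      · rw [s2]; exact Ideal.mul_mem_left _ _ g2mem
    | zero => rw [map_zero]; exact zero_mem _
    | add a b ha hb iha ihb => rw [map_add]; exact add_mem iha ihb
    | smul t a ha ih => rw [smul_eq_mul, map_mul]; exact Ideal.mul_mem_left _ _ ih
  · intro σbar hcompat
    ext x
    simp only [Set.mem_setOf_eq, SetLike.mem_coe]
    constructor
    · intro hx
      obtain ⟨P, rfl⟩ := Ideal.Quotient.mk_surjective x
      obtain ⟨s, f, rfl⟩ : ∃ (s : Finset (Fin 3 →₀ ℕ)) (f : (Fin 3 →₀ ℕ) → k),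
          P = ∑ u ∈ s, C (f u) * (X 0 ^ (u 0) * X 1 ^ (u 1) * X 2 ^ (u 2)) := by
        refine ⟨P.support, fun u => coeff u P, ?_⟩
        conv_lhs => rw [← support_sum_monomial_coeff P]
        exact Finset.sum_congr rfl fun u _ => stmt8_mono_eq u _
      have hσm : ∀ g : (Fin 3 →₀ ℕ) → k,
          (aeval fun i => C ρ * X i : MvPolynomial (Fin 3) k →ₐ[k] _)
              (∑ u ∈ s, C (g u) * (X 0 ^ (u 0) * X 1 ^ (u 1) * X 2 ^ (u 2)))
            = ∑ u ∈ s, C (ρ ^ (u 0 + u 1 + u 2) * g u)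
                * (X 0 ^ (u 0) * X 1 ^ (u 1) * X 2 ^ (u 2)) := by
        intro g
        rw [map_sum]
        refine Finset.sum_congr rfl fun u _ => ?_
        simp only [map_mul, map_pow, aeval_X, aeval_C, algebraMap_eq, mul_pow, C_mul, C_pow,
          pow_add]
        ring
      set T : MvPolynomial (Fin 3) k
          := ∑ u ∈ s, C (f u) * (X 0 ^ (u 0) * X 1 ^ (u 1) * X 2 ^ (u 2)) with hT
      have hQ : T + (aeval fun i => C ρ * X i : MvPolynomial (Fin 3) k →ₐ[k] _) T
            + (aeval fun i => C ρ * X i : MvPolynomial (Fin 3) k →ₐ[k] _)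
                ((aeval fun i => C ρ * X i : MvPolynomial (Fin 3) k →ₐ[k] _) T)
          = ∑ u ∈ s, C ((1 + ρ ^ (u 0 + u 1 + u 2)
                + ρ ^ (u 0 + u 1 + u 2) * ρ ^ (u 0 + u 1 + u 2)) * f u)
              * (X 0 ^ (u 0) * X 1 ^ (u 1) * X 2 ^ (u 2)) := by
        rw [hT, hσm f, hσm (fun u => ρ ^ (u 0 + u 1 + u 2) * f u), ← Finset.sum_add_distrib,
          ← Finset.sum_add_distrib]
        refine Finset.sum_congr rfl fun u _ => ?_
        simp only [C_add, C_mul, C_1]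
        ring
      have c1 : Ideal.Quotient.mk J
            ((aeval fun i => C ρ * X i : MvPolynomial (Fin 3) k →ₐ[k] _) T)
          = Ideal.Quotient.mk J T := by
        rw [← hcompat T, hx]
      have c2 : Ideal.Quotient.mk J
            ((aeval fun i => C ρ * X i : MvPolynomial (Fin 3) k →ₐ[k] _)
              ((aeval fun i => C ρ * X i : MvPolynomial (Fin 3) k →ₐ[k] _) T))
          = Ideal.Quotient.mk J T := by
        rw [← hcompat ((aeval fun i => C ρ * X i : MvPolynomial (Fin 3) k →ₐ[k] _) T), c1, hx]
      have hsum3 : Ideal.Quotient.mk J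
            (∑ u ∈ s, C ((1 + ρ ^ (u 0 + u 1 + u 2)
                + ρ ^ (u 0 + u 1 + u 2) * ρ ^ (u 0 + u 1 + u 2)) * f u)
              * (X 0 ^ (u 0) * X 1 ^ (u 1) * X 2 ^ (u 2)))
          = (3 : k) • Ideal.Quotient.mk J T := by
        rw [← hQ]
        simp only [map_add]
        rw [c1, c2, show (3 : k) = 1 + 1 + 1 by norm_num, add_smul, add_smul, one_smul]
      have hmemQ : Ideal.Quotient.mk J
            (∑ u ∈ s, C ((1 + ρ ^ (u 0 + u 1 + u 2)
                + ρ ^ (u 0 + u 1 + u 2) * ρ ^ (u 0 + u 1 + u 2)) * f u)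
              * (X 0 ^ (u 0) * X 1 ^ (u 1) * X 2 ^ (u 2)))
          ∈ Submodule.span k
            ({Ideal.Quotient.mk J 1, Ideal.Quotient.mk J (X 0 * X 1 * X 2)} :
              Set (MvPolynomial (Fin 3) k ⧸ J)) := by
        rw [map_sum]
        refine Submodule.sum_mem _ fun u _ => ?_
        rw [stmt8_mk_C_mul]
        by_cases hdvd : 3 ∣ (u 0 + u 1 + u 2)
        · exact Submodule.smul_mem _ _ (stmt8_span J hc3 h0 h1 h2 _ _ _ hdvd)
        · have hm : ρ ^ (u 0 + u 1 + u 2) = ρ ^ ((u 0 + u 1 + u 2) % 3) := by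
            conv_lhs => rw [← Nat.div_add_mod (u 0 + u 1 + u 2) 3]
            rw [pow_add, pow_mul, hρ3, one_pow, one_mul]
          have hz : (1 + ρ ^ (u 0 + u 1 + u 2)
              + ρ ^ (u 0 + u 1 + u 2) * ρ ^ (u 0 + u 1 + u 2)) = 0 := by
            have hcases : (u 0 + u 1 + u 2) % 3 = 1 ∨ (u 0 + u 1 + u 2) % 3 = 2 := by omega
            rcases hcases with h | h <;> rw [hm, h]
            · linear_combination hρ
            · linear_combination (ρ ^ 2 - ρ + 1) * hρ
          rw [hz, zero_mul, zero_smul]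
          exact zero_mem _
      have hxeq : Ideal.Quotient.mk J T
          = (3 : k)⁻¹ • ((3 : k) • Ideal.Quotient.mk J T) := by
        rw [smul_smul, inv_mul_cancel₀ h3, one_smul]
      rw [hxeq, ← hsum3]
      exact Submodule.smul_mem _ _ hmemQ
    · intro hx
      induction hx using Submodule.span_induction with
      | mem y hy =>
        simp only [Set.mem_insert_iff, Set.mem_singleton_iff] at hy
        rcases hy with rfl | rfl
        · rw [hcompat, map_one]
        · rw [hcompat]
          have e : (aeval fun i => C ρ * X i : MvPolynomial (Fin 3) k →ₐ[k] _)
              ((X 0 : MvPolynomial (Fin 3) k) * X 1 * X 2) = X 0 * X 1 * X 2 := by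
            simp only [map_mul, aeval_X]
            rw [show (C ρ * X 0) * (C ρ * X 1) * (C ρ * X 2)
                = C (ρ ^ 3) * ((X 0 : MvPolynomial (Fin 3) k) * X 1 * X 2) by
              rw [C_pow]; ring]
            rw [hρ3, C_1, one_mul]
          rw [e]
      | zero => rw [map_zero]
      | add a b ha hb iha ihb => rw [map_add, iha, ihb]
      | smul t a ha ih => rw [map_smul, ih]
end

section
/- Let R be a commutative ring and u₁, u₂, u₃, f₁, f₂, f₃, c₁₂, c₁₃, c₂₃, c ∈ R. Let M be the 8×8 matrix over R whose rows are: (0,0,0,0,0,u₁,u₂,u₃), (0,0,0,0,u₁,0,c₁₂,c₁₃), (0,0,0,0,u₂,−c₁₂,0,c₂₃), (0,0,0,0,u₃,−c₁₃,−c₂₃,0), (0,f₁,f₂,f₃,0,0,0,0), (f₁,0,u₃,−u₂,0,0,0,0), (f₂,−u₃,0,u₁,0,0,0,0), (f₃,u₂,−u₁,0,0,0,0,0). If M² = c·Id₈ (that is, M is a matrix factorization of c), then c = u₁f₁ + u₂f₂ + u₃f₃, and the relations f₂c₁₂ + f₃c₁₃ = 0, f₁c₁₂ − f₃c₂₃ =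 0, f₁c₁₃ + f₂c₂₃ = 0 hold. (In the paper, uᵢ = yᵢ − xᵢ and c = W(y) − W(x), and these are the relations W(y) − W(x) = Σᵢ(yᵢ−xᵢ)fᵢ together with −f₂c₁₂ + f₃c₃₁ = 0, f₁c₁₂ − f₃c₂₃ = 0, −f₁c₃₁ + f₂c₂₃ = 0 where c₃₁ = −c₁₃, derived from the matrix factorization of W(y) − W(x) associated to the Seidel Lagrangian in P¹_{a,b,c}.) -/
/-- If the 8×8 matrix `M` arising from the Seidel Lagrangian Floer complex is a matrix
factorization of `c` (i.e. `M² = c·Id₈`), then `c = u₁f₁ + u₂f₂ + u₃f₃` and the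
relations `f₂c₁₂ + f₃c₁₃ = 0`, `f₁c₁₂ − f₃c₂₃ = 0`, `f₁c₁₃ + f₂c₂₃ = 0` hold. -/
theorem stmt9 (R : Type*) [CommRing R]
    (u₁ u₂ u₃ f₁ f₂ f₃ c₁₂ c₁₃ c₂₃ c : R)
    (M : Matrix (Fin 8) (Fin 8) R)
    (hM : M = !![0, 0, 0, 0, 0, u₁, u₂, u₃;
                 0, 0, 0, 0, u₁, 0, c₁₂, c₁₃;
                 0, 0, 0, 0, u₂, -c₁₂, 0, c₂₃;
                 0, 0, 0, 0, u₃, -c₁₃, -c₂₃, 0;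
                 0, f₁, f₂, f₃, 0, 0, 0, 0;
                 f₁, 0, u₃, -u₂, 0, 0, 0, 0;
                 f₂, -u₃, 0, u₁, 0, 0, 0, 0;
                 f₃, u₂, -u₁, 0, 0, 0, 0, 0])
    (hfac : M * M = c • (1 : Matrix (Fin 8) (Fin 8) R)) :
    c = u₁ * f₁ + u₂ * f₂ + u₃ * f₃ ∧
    f₂ * c₁₂ + f₃ * c₁₃ = 0 ∧
    f₁ * c₁₂ - f₃ * c₂₃ = 0 ∧
    f₁ * c₁₃ + f₂ * c₂₃ = 0 := by
  subst hM
  have h00 := congrFun (congrFun hfac 0) 0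
  have h10 := congrFun (congrFun hfac 1) 0
  have h20 := congrFun (congrFun hfac 2) 0
  have h30 := congrFun (congrFun hfac 3) 0
  simp [Matrix.mul_apply, Fin.sum_univ_succ, Matrix.one_apply] at h00 h10 h20 h30
  exact ⟨by linear_combination -h00, by linear_combination h10,
    by linear_combination -h20, by linear_combination -h30⟩
end
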